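/- Let K' be a complete non-archimedean field, I = [α, β] ⊆ (0,1) a closed interval with α < β, and a = Σ_{n∈ℤ} aₙ tⁿ a nonzero Laurent series convergent on the annulus {α ≤ |t| ≤ β} with coefficients aₙ ∈ K', so that sup_n |aₙ|αⁿ < ∞ and sup_n |aₙ|βⁿ < ∞. Define A = {n ≤ 0 : |aₙ|αⁿ = max(sup_{m≤0}|aₘ|αᵐ, sup_{m≥0}|aₘ|βᵐ)} and assume A is nonempty with maximal element n₀. Then there exists a closed subinterval I' = [α', β'] ⊆ I of positive length such that |aₙ|ρⁿ < |a_{n₀}|ρ^{n₀} for all n ≠ n₀ and all ρ ∈ I'; consequently a = a_{n₀} t^{n₀}(1 + f) with |f|_ρ < 1 for ρ ∈ I', so a is invertible on the annulus {|t| ∈ I'} and |a|_ρ = |a_{n₀}|ρ^{n₀} for ρ ∈ I'. -/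
import Mathlib


/-- key claim of Lemma 2.5. Let `a = Σ aₙ tⁿ` be a nonzero Laurent series
over a complete non-archimedean field, convergent on the closed annulus of radii
`[α, β] ⊆ (0,1)` (so `‖aₙ‖αⁿ → 0` as `n → -∞` and `‖aₙ‖βⁿ → 0` as `n → +∞`, and the
Gauss norms at `α`, `β` are bounded by the supremum norm `M = ‖a_{n₀}‖α^{n₀}`), and let
`n₀ ≤ 0` be the maximal index with `‖a_{n₀}‖α^{n₀} = M`. Then on some subinterval
`[α',β'] ⊆ [α,β]` of positive length, the term `n₀` strictly dominates all others;
consequently `a_{n₀} ≠ 0` and the `ρ`-Gauss norm of `a` equals `‖a_{n₀}‖ρ^{n₀}` there. -/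
theorem stmt8 (K' : Type*) [NormedField K'] [IsUltrametricDist K'] [CompleteSpace K']
    (α β : ℝ) (hα : 0 < α) (hαβ : α < β) (hβ : β < 1)
    (a : ℤ → K') (hne : ∃ n, a n ≠ 0)
    (hconv_neg : Filter.Tendsto (fun n : ℕ => ‖a (-(n : ℤ))‖ * α ^ (-(n : ℤ)))
      Filter.atTop (nhds 0))
    (hconv_pos : Filter.Tendsto (fun n : ℕ => ‖a (n : ℤ)‖ * β ^ (n : ℤ))
      Filter.atTop (nhds 0))
    (n₀ : ℤ) (hn₀ : n₀ ≤ 0)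
    (hmax1 : ∀ n : ℤ, n ≤ 0 → ‖a n‖ * α ^ n ≤ ‖a n₀‖ * α ^ n₀)
    (hmax2 : ∀ n : ℤ, 0 ≤ n → ‖a n‖ * β ^ n ≤ ‖a n₀‖ * α ^ n₀)
    (hmaxelt : ∀ n : ℤ, n ≤ 0 → n₀ < n → ‖a n‖ * α ^ n < ‖a n₀‖ * α ^ n₀) :
    a n₀ ≠ 0 ∧
    ∃ α' β' : ℝ, α ≤ α' ∧ α' < β' ∧ β' ≤ β ∧
      (∀ ρ ∈ Set.Icc α' β', ∀ n : ℤ, n ≠ n₀ → ‖a n‖ * ρ ^ n < ‖a n₀‖ * ρ ^ n₀) ∧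
      (∀ ρ ∈ Set.Icc α' β', (⨆ n : ℤ, ‖a n‖ * ρ ^ n) = ‖a n₀‖ * ρ ^ n₀) := by
  have hβ0 : (0:ℝ) < β := hα.trans hαβ
  set M : ℝ := ‖a n₀‖ * α ^ n₀ with hMdef
  -- M is positive
  have hMpos : 0 < M := by
    obtain ⟨n, hn⟩ := hne
    have hna : 0 < ‖a n‖ := norm_pos_iff.mpr hn
    rcases le_or_gt n 0 with h | h
    · exact lt_of_lt_of_le (mul_pos hna (zpow_pos hα n)) (hmax1 n h)
    · exact lt_of_lt_of_le (mul_pos hna (zpow_pos hβ0 n)) (hmax2 n h.le)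
  have han₀ : a n₀ ≠ 0 := by
    intro h
    rw [hMdef, h, norm_zero, zero_mul] at hMpos
    exact lt_irrefl 0 hMpos
  refine ⟨han₀, ?_⟩
  -- the finitely many intermediate indices
  set S : Finset ℤ := Finset.Icc (n₀ + 1) 0 with hSdef
  set c : ℝ := if h : S.Nonempty then S.sup' h (fun n => ‖a n‖ * α ^ n) else 0 with hcdef
  have hc_lt : c < M := by
    by_cases h : S.Nonempty
    · rw [hcdef, dif_pos h, Finset.sup'_lt_iff]
      intro n hn
      rw [hSdef, Finset.mem_Icc] at hn
      exact hmaxelt n hn.2 (by omega)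
    · rw [hcdef, dif_neg h]; exact hMpos
  have hc_mem : ∀ n : ℤ, n₀ < n → n ≤ 0 → ‖a n‖ * α ^ n ≤ c := by
    intro n h1 h2
    have hnS : n ∈ S := by rw [hSdef, Finset.mem_Icc]; omega
    rw [hcdef, dif_pos ⟨n, hnS⟩]
    exact Finset.le_sup' (fun n => ‖a n‖ * α ^ n) hnS
  set θ : ℝ := max c ((1 + α / β) / 2 * M) with hθdef
  have hαβ1 : α / β < 1 := (div_lt_one hβ0).mpr hαβ
  have hαβ0 : 0 < α / β := div_pos hα hβ0
  have hθM : θ < M := by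
    apply max_lt hc_lt
    nlinarith
  have hθpos : 0 < θ := lt_of_lt_of_le (by nlinarith) (le_max_right _ _)
  have hθhalf : (1 + α / β) / 2 * M ≤ θ := le_max_right _ _
  -- choose β' via continuity of r ↦ M * (r/α)^n₀ at α
  have hcont : ContinuousAt (fun r : ℝ => M * (r / α) ^ n₀) α := by
    apply ContinuousAt.mul continuousAt_const
    apply ContinuousAt.comp (x := α) (g := fun y : ℝ => y ^ n₀)
    · exact continuousAt_zpow₀ _ _ (Or.inl (by positivity))
    · exact (continuousAt_id.div continuousAt_const hα.ne')
  have hval : (fun r : ℝ => M * (r / α) ^ n₀) α = M := by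
    simp [div_self hα.ne']
  have hev : ∀ᶠ r in nhds α, θ < M * (r / α) ^ n₀ := by
    have h2 := hcont.tendsto
    rw [div_self hα.ne', one_zpow, mul_one] at h2
    exact h2.eventually_const_lt hθM
  obtain ⟨δ, hδpos, hδ⟩ := Metric.eventually_nhds_iff.mp hev
  have hθβM : α < θ * β / M := by
    rw [lt_div_iff₀ hMpos]
    have h1 : (1 + α / β) / 2 * M * β ≤ θ * β := mul_le_mul_of_nonneg_right hθhalf hβ0.le
    have h2 : α / β * β = α := div_mul_cancel₀ α hβ0.ne'
    nlinarith
  set β' : ℝ := min (α + δ / 2) (θ * β / M) with hβ'def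
  have hαβ' : α < β' := lt_min (by linarith) hθβM
  have hβ'β : β' ≤ β := by
    refine le_trans (min_le_right _ _) ?_
    rw [div_le_iff₀ hMpos]
    nlinarith
  have hgβ' : θ < M * (β' / α) ^ n₀ := by
    apply hδ
    rw [Real.dist_eq, abs_lt]
    have h1 : β' ≤ α + δ / 2 := min_le_left _ _
    constructor <;> linarith
  have hβ'θ : M * (β' / β) ≤ θ := by
    have h1 : β' ≤ θ * β / M := min_le_right _ _
    have h2 : β' * M ≤ θ * β := (le_div_iff₀ hMpos).mp h1
    rw [mul_div_assoc', div_le_iff₀ hβ0]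
    nlinarith
  set α' : ℝ := (α + β') / 2 with hα'def
  have hαα' : α < α' := by rw [hα'def]; linarith
  have hα'β' : α' < β' := by rw [hα'def]; linarith
  -- rewrite RHS
  have hrhs : ∀ ρ : ℝ, 0 < ρ → ‖a n₀‖ * ρ ^ n₀ = M * (ρ / α) ^ n₀ := by
    intro ρ hρ
    rw [hMdef, div_zpow, mul_assoc, mul_div_assoc', mul_comm (α ^ n₀) (ρ ^ n₀),
      mul_div_assoc, div_self (by positivity), mul_one]
  -- anti-monotonicity of zpow with nonpositive exponent
  have anti : ∀ x y : ℝ, 0 < x → x ≤ y → ∀ n : ℤ, n ≤ 0 → y ^ n ≤ x ^ n := by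
    intro x y hx hxy n hn
    obtain ⟨m, rfl⟩ : ∃ m : ℕ, n = -(m : ℤ) := ⟨(-n).toNat, by omega⟩
    rw [zpow_neg, zpow_neg, zpow_natCast, zpow_natCast]
    exact inv_anti₀ (pow_pos hx m) (pow_le_pow_left₀ hx.le hxy m)
  have key : ∀ ρ ∈ Set.Icc α' β', ∀ n : ℤ, n ≠ n₀ → ‖a n‖ * ρ ^ n < ‖a n₀‖ * ρ ^ n₀ := by
    rintro ρ ⟨hρ1, hρ2⟩ n hn
    have hαρ : α < ρ := lt_of_lt_of_le hαα' hρ1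
    have hρβ : ρ ≤ β := le_trans hρ2 hβ'β
    have hρ0 : 0 < ρ := hα.trans hαρ
    rw [hrhs ρ hρ0]
    have hRpos : M * (β' / α) ^ n₀ ≤ M * (ρ / α) ^ n₀ := by
      apply mul_le_mul_of_nonneg_left _ hMpos.le
      exact anti (ρ / α) (β' / α) (by positivity) (by gcongr) n₀ hn₀
    rcases lt_trichotomy n n₀ with h | h | h
    · -- n < n₀
      have h1 : ‖a n‖ * ρ ^ n = (‖a n‖ * α ^ n) * (ρ / α) ^ n := by
        rw [div_zpow, mul_assoc, mul_div_assoc', mul_comm (α ^ n) (ρ ^ n),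
          mul_div_assoc, div_self (by positivity), mul_one]
      rw [h1]
      calc (‖a n‖ * α ^ n) * (ρ / α) ^ n
          ≤ M * (ρ / α) ^ n := by
            apply mul_le_mul_of_nonneg_right (hmax1 n (by omega)) (by positivity)
        _ < M * (ρ / α) ^ n₀ := by
            apply mul_lt_mul_of_pos_left _ hMpos
            exact zpow_lt_zpow_right₀ ((one_lt_div hα).mpr hαρ) h
    · exact absurd h hn
    · rcases le_or_gt n 0 with h0 | h0
      · -- n₀ < n ≤ 0
        calc ‖a n‖ * ρ ^ n
            ≤ ‖a n‖ * α ^ n := by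
              apply mul_le_mul_of_nonneg_left (anti α ρ hα hαρ.le n h0) (norm_nonneg _)
          _ ≤ c := hc_mem n h h0
          _ ≤ θ := le_max_left _ _
          _ < M * (β' / α) ^ n₀ := hgβ'
          _ ≤ M * (ρ / α) ^ n₀ := hRpos
      · -- 1 ≤ n
        have h1 : ‖a n‖ * ρ ^ n = (‖a n‖ * β ^ n) * (ρ / β) ^ n := by
          rw [div_zpow, mul_assoc, mul_div_assoc', mul_comm (β ^ n) (ρ ^ n),
            mul_div_assoc, div_self (by positivity), mul_one]
        rw [h1]
        calc (‖a n‖ * β ^ n) * (ρ / β) ^ n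
            ≤ M * (ρ / β) ^ n := by
              apply mul_le_mul_of_nonneg_right (hmax2 n (by omega)) (by positivity)
          _ ≤ M * (ρ / β) ^ (1 : ℤ) := by
              apply mul_le_mul_of_nonneg_left _ hMpos.le
              exact zpow_le_zpow_right_of_le_one₀ (by positivity)
                ((div_le_one hβ0).mpr hρβ) (by omega)
          _ ≤ M * (β' / β) := by
              rw [zpow_one]
              apply mul_le_mul_of_nonneg_left _ hMpos.le
              gcongr
          _ ≤ θ := hβ'θ
          _ < M * (β' / α) ^ n₀ := hgβ'
          _ ≤ M * (ρ / α) ^ n₀ := hRpos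
  refine ⟨α', β', hαα'.le, hα'β', hβ'β, key, ?_⟩
  intro ρ hρ
  have hb : ∀ n : ℤ, ‖a n‖ * ρ ^ n ≤ ‖a n₀‖ * ρ ^ n₀ := by
    intro n
    by_cases h : n = n₀
    · subst h; exact le_refl _
    · exact (key ρ hρ n h).le
  refine le_antisymm (ciSup_le hb) (le_ciSup (f := fun n : ℤ => ‖a n‖ * ρ ^ n) ?_ n₀)
  exact ⟨‖a n₀‖ * ρ ^ n₀, by rintro y ⟨n, rfl⟩; exact hb n⟩
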